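/- Let C ⊆ F_q^n be a linear code with parity check matrix H, and define nullity η(σ) = |σ| - rank of the columns of H indexed by σ. Then for 0 ≤ i ≤ dim C and σ ⊆ {1,...,n}: σ is a minimal element of {τ : η(τ) = i} if and only if σ is the support of some i-dimensional subcode of C whose support is minimal among supports of i-dimensional subcodes. -/

import Mathlib

open Module Submodule

private lemma aux_exists_sub {F V : Type*} [Field F] [AddCommGroup V] [Module F V]
    [FiniteDimensional F V] (k : ℕ) (hk : k ≤ Module.finrank F V) :
    ∃ W : Submodule F V, Module.finrank F W = k := by
  induction k with
  | zero => exact ⟨⊥, finrank_bot F V⟩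
  | succ k ih =>
    obtain ⟨W, hW⟩ := ih (le_of_lt (Nat.lt_of_succ_le hk))
    have hlt : Module.finrank F W < Module.finrank F V := by omega
    obtain ⟨v, hv⟩ := W.exists_of_finrank_lt hlt
    have hvW : v ∉ W := by simpa using hv 1 one_ne_zero
    have hv0 : v ≠ 0 := fun h => hvW (h ▸ W.zero_mem)
    refine ⟨W ⊔ Submodule.span F {v}, ?_⟩
    have hinf : W ⊓ Submodule.span F {v} = ⊥ := by
      rw [Submodule.eq_bot_iff]
      rintro y ⟨hyW, hy⟩
      obtain ⟨r, rfl⟩ := Submodule.mem_span_singleton.mp hy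
      rcases eq_or_ne r 0 with rfl | hr
      · simp
      · exact absurd hyW (hv r hr)
    have h2 := Submodule.finrank_sup_add_finrank_inf_eq W (Submodule.span F {v})
    rw [hinf, finrank_bot, finrank_span_singleton hv0, hW] at h2
    omega

private lemma aux_code {F : Type*} [Field F] {n m : ℕ} (H : Fin n → Fin m → F)
    (τ : Set (Fin n)) :
    ∃ W : Submodule F (Fin n → F),
      (∀ x : Fin n → F, x ∈ W ↔ ((∑ j, x j • H j = 0) ∧ ∀ j ∉ τ, x j = 0)) ∧
      Module.finrank F W + Module.finrank F (Submodule.span F (H '' τ)) = τ.ncard := by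
  classical
  letI : Fintype ↥τ := τ.toFinite.fintype
  set ψ := Fintype.linearCombination F (fun j : ↥τ => H ↑j) with hψ
  let e : (↥τ → F) →ₗ[F] (Fin n → F) :=
    { toFun := fun x j => if h : j ∈ τ then x ⟨j, h⟩ else 0
      map_add' := fun x y => by funext j; by_cases h : j ∈ τ <;> simp [h]
      map_smul' := fun c x => by funext j; by_cases h : j ∈ τ <;> simp [h] }
  have he : Function.Injective e := by
    intro x y h
    funext j
    have := congrFun h (↑j : Fin n)
    simpa [e, dif_pos j.2] using this
  have hsum : ∀ y : ↥τ → F, (∑ j, e y j • H j) = ψ y := by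
    intro y
    rw [hψ, Fintype.linearCombination_apply]
    rw [← Finset.sum_subset (Finset.subset_univ τ.toFinset)
      (by intro j _ hj
          have hj' : j ∉ τ := by simpa [Set.mem_toFinset] using hj
          simp [e, dif_neg hj'])]
    rw [Finset.sum_subtype τ.toFinset (fun j => Set.mem_toFinset) (fun j => e y j • H j)]
    refine Finset.sum_congr rfl fun j _ => ?_
    simp [e, dif_pos j.2]
  refine ⟨(LinearMap.ker ψ).map e, fun x => ?_, ?_⟩
  · constructor
    · rintro ⟨y, hy, rfl⟩
      refine ⟨by rw [hsum]; exact hy, fun j hj => by simp [e, dif_neg hj]⟩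
    · rintro ⟨h1, h2⟩
      refine ⟨fun j => x ↑j, ?_, ?_⟩
      · have hex : e (fun j => x ↑j) = x := by
          funext j
          by_cases h : j ∈ τ
          · simp [e, dif_pos h]
          · simp [e, dif_neg h, (h2 j h).symm]
        have : ψ (fun j => x ↑j) = 0 := by
          rw [← hsum]; rw [hex]; exact h1
        exact this
      · funext j
        by_cases h : j ∈ τ
        · simp [e, dif_pos h]
        · simp [e, dif_neg h, (h2 j h).symm]
  · have h1 : Module.finrank F ((LinearMap.ker ψ).map e) =
        Module.finrank F (LinearMap.ker ψ) :=
      ((LinearMap.ker ψ).equivMapOfInjective e he).finrank_eq.symm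
    have h2 := LinearMap.finrank_range_add_finrank_ker ψ
    have h3 : LinearMap.range ψ = Submodule.span F (H '' τ) := by
      rw [hψ, Fintype.range_linearCombination]
      congr 1
      exact (Set.image_eq_range H τ).symm
    have h4 : Module.finrank F (↥τ → F) = τ.ncard := by
      rw [Module.finrank_fintype_fun_eq_card, ← Nat.card_eq_fintype_card,
        Nat.card_coe_set_eq]
    rw [h3, h4] at h2
    omega

/-- For `0 ≤ i ≤ dim C` and `σ ⊆ {1,…,n}`: `σ` is a minimal element of
`{τ : η(τ) = i}` (where `η(τ) = |τ| - rank of the columns of H indexed by τ`) if and only if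
`σ` is the support of some `i`-dimensional subcode of `C = {x | ∑ j, x j • H j = 0}` whose
support is minimal among supports of `i`-dimensional subcodes. -/
theorem stmt_4 {F : Type*} [Field F] [Fintype F] {n m : ℕ}
    (H : Fin n → (Fin m → F)) (i : ℕ)
    (C : Submodule F (Fin n → F))
    (hC : (C : Set (Fin n → F)) = {x : Fin n → F | ∑ j, x j • H j = 0})
    (hi : i ≤ Module.finrank F C)
    (η : Set (Fin n) → ℕ)
    (hη : ∀ τ : Set (Fin n), η τ = τ.ncard -
      Module.finrank F (Submodule.span F (H '' τ)))
    (supp : Submodule F (Fin n → F) → Set (Fin n))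
    (hsupp : ∀ D, supp D = {j : Fin n | ∃ x ∈ D, x j ≠ 0})
    (σ : Set (Fin n)) :
    (η σ = i ∧ ∀ τ : Set (Fin n), τ ⊆ σ → η τ = i → τ = σ) ↔
    (∃ D : Submodule F (Fin n → F), D ≤ C ∧ Module.finrank F D = i ∧
      (∀ D' : Submodule F (Fin n → F), D' ≤ C → Module.finrank F D' = i →
        supp D' ⊆ supp D → supp D' = supp D) ∧
      supp D = σ) := by
  classical
  choose W hWmem hWrank using aux_code H
  have hCmem : ∀ x : Fin n → F, x ∈ C ↔ ∑ j, x j • H j = 0 := by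
    intro x
    rw [← SetLike.mem_coe, hC]; rfl
  -- η equals the dimension of W
  have hηW : ∀ τ : Set (Fin n), η τ = Module.finrank F (W τ) := by
    intro τ
    have := hWrank τ
    rw [hη]
    omega
  -- monotonicity
  have hmono : ∀ τ ρ : Set (Fin n), τ ⊆ ρ → W τ ≤ W ρ := by
    intro τ ρ hsub x hx
    rw [hWmem] at hx ⊢
    exact ⟨hx.1, fun j hj => hx.2 j (fun h => hj (hsub h))⟩
  have hWC : ∀ τ : Set (Fin n), W τ ≤ C := by
    intro τ x hx
    rw [hCmem]
    exact ((hWmem τ x).mp hx).1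
  -- subcodes with small support lie in W
  have hle : ∀ (D : Submodule F (Fin n → F)) (τ : Set (Fin n)),
      D ≤ C → supp D ⊆ τ → D ≤ W τ := by
    intro D τ hDC hs x hx
    rw [hWmem]
    refine ⟨(hCmem x).mp (hDC hx), fun j hj => ?_⟩
    by_contra hxj
    exact hj (hs (by rw [hsupp]; exact ⟨x, hx, hxj⟩))
  -- support of a subcode of W τ is contained in τ
  have hsupp_sub : ∀ (D : Submodule F (Fin n → F)) (τ : Set (Fin n)),
      D ≤ W τ → supp D ⊆ τ := by
    intro D τ hD j hj
    rw [hsupp] at hj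
    obtain ⟨x, hx, hxj⟩ := hj
    by_contra hjτ
    exact hxj (((hWmem τ x).mp (hD hx)).2 j hjτ)
  constructor
  · rintro ⟨hσi, hmin⟩
    refine ⟨W σ, hWC σ, by rw [← hηW σ]; exact hσi, ?_, ?_⟩
    · -- minimality of support
      intro D' hD'C hD'i hss
      have hsσ : supp (W σ) = σ := ?_
      · rw [hsσ] at hss ⊢
        have h1 : D' ≤ W (supp D') := hle D' (supp D') hD'C subset_rfl
        have h2 : W (supp D') ≤ W σ := hmono _ _ hss
        have hlow : i ≤ η (supp D') := by
          rw [hηW]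
          calc i = Module.finrank F D' := hD'i.symm
            _ ≤ _ := Submodule.finrank_mono h1
        have hhigh : η (supp D') ≤ i := by
          rw [hηW, ← hσi, hηW]
          exact Submodule.finrank_mono h2
        exact hmin (supp D') hss (le_antisymm hhigh hlow)
      · -- supp (W σ) = σ
        have hs1 : supp (W σ) ⊆ σ := hsupp_sub _ _ le_rfl
        have h1 : W σ ≤ W (supp (W σ)) := hle _ _ (hWC σ) subset_rfl
        have h2 : W (supp (W σ)) ≤ W σ := hmono _ _ hs1
        have : η (supp (W σ)) = i := by
          rw [hηW, le_antisymm h2 h1, ← hηW]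
          exact hσi
        exact hmin _ hs1 this
    · -- supp (W σ) = σ (again)
      have hs1 : supp (W σ) ⊆ σ := hsupp_sub _ _ le_rfl
      have h1 : W σ ≤ W (supp (W σ)) := hle _ _ (hWC σ) subset_rfl
      have h2 : W (supp (W σ)) ≤ W σ := hmono _ _ hs1
      have : η (supp (W σ)) = i := by
        rw [hηW, le_antisymm h2 h1, ← hηW]
        exact hσi
      exact hmin _ hs1 this
  · rintro ⟨D, hDC, hDi, hDmin, hDsupp⟩
    have hDW : D ≤ W σ := hle D σ hDC (hDsupp ▸ subset_rfl)
    have hige : i ≤ Module.finrank F (W σ) := by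
      rw [← hDi]; exact Submodule.finrank_mono hDW
    have hWσi : Module.finrank F (W σ) = i := by
      by_contra hne
      have hlt : i < Module.finrank F (W σ) := lt_of_le_of_ne hige (Ne.symm hne)
      -- get a coordinate j ∈ σ
      have hbot : W σ ≠ ⊥ := by
        intro h
        rw [h, finrank_bot] at hlt
        omega
      obtain ⟨x, hxW, hx0⟩ := Submodule.ne_bot_iff _ |>.mp hbot
      obtain ⟨j, hxj⟩ : ∃ j, x j ≠ 0 := by
        by_contra h
        push_neg at h
        exact hx0 (funext h)
      have hjσ : j ∈ σ := by
        by_contra hjτ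
        exact hxj (((hWmem σ x).mp hxW).2 j hjτ)
      -- subcode of W σ vanishing at j
      set φ : ↥(W σ) →ₗ[F] F := (LinearMap.proj j).domRestrict (W σ) with hφ
      have hrank := LinearMap.finrank_range_add_finrank_ker φ
      have hr1 : Module.finrank F (LinearMap.range φ) ≤ 1 := by
        calc Module.finrank F (LinearMap.range φ) ≤ Module.finrank F F :=
          (LinearMap.range φ).finrank_le
        _ = 1 := Module.finrank_self F
      have hEi : i ≤ Module.finrank F (LinearMap.ker φ) := by
        have : Module.finrank F ↥(W σ) = Module.finrank F (W σ) := rfl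
        omega
      obtain ⟨U, hU⟩ := aux_exists_sub (F := F) (V := ↥(LinearMap.ker φ)) i hEi
      set D' : Submodule F (Fin n → F) :=
        ((U.map (LinearMap.ker φ).subtype).map (W σ).subtype) with hD'
      have hD'W : D' ≤ W σ := Submodule.map_subtype_le _ _
      have hD'r : Module.finrank F D' = i := by
        rw [hD', Submodule.finrank_map_subtype_eq, Submodule.finrank_map_subtype_eq, hU]
      have hD'supp : supp D' ⊆ supp D := by
        rw [hDsupp]
        exact hsupp_sub _ _ hD'W
      have heq := hDmin D' (le_trans hD'W (hWC σ)) hD'r hD'supp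
      have hjnot : j ∉ supp D' := by
        rw [hsupp]
        rintro ⟨y, hy, hyj⟩
        rw [hD'] at hy
        obtain ⟨z, hz, rfl⟩ := hy
        obtain ⟨w, _, rfl⟩ := hz
        have hw0 : φ ((LinearMap.ker φ).subtype w) = 0 := w.2
        exact hyj hw0
      rw [heq, hDsupp] at hjnot
      exact hjnot hjσ
    refine ⟨by rw [hηW]; exact hWσi, ?_⟩
    intro τ hτσ hτi
    have hWτσ : W τ = W σ :=
      Submodule.eq_of_le_of_finrank_eq (hmono _ _ hτσ)
        (by rw [← hηW τ, hτi]; exact hWσi.symm)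
    have hDτ : D ≤ W τ := hWτσ ▸ hDW
    have : supp D ⊆ τ := hsupp_sub _ _ hDτ
    exact le_antisymm hτσ (hDsupp ▸ this)
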